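/- An infinite virtually cyclic group surjects onto either ℤ or the infinite dihedral group D∞ ≅ ℤ/2 ∗ ℤ/2. -/

import Mathlib

open Subgroup Function

noncomputable def zexpHom {G : Type*} [Group G] (a : G) :
    Multiplicative ℤ →* ↥(Subgroup.zpowers a) where
  toFun := fun n => ⟨a ^ n.toAdd, zpow_mem (mem_zpowers a) _⟩
  map_one' := by ext; simp
  map_mul' := fun m n => by ext; simp [zpow_add]

noncomputable def zlogEquiv {G : Type*} [Group G] {a : G} (ha : ¬ IsOfFinOrder a) :
    Multiplicative ℤ ≃* ↥(Subgroup.zpowers a) :=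
  MulEquiv.ofBijective (zexpHom a)
    ⟨fun m n h => by
        have := congrArg Subtype.val h
        simpa using (injective_zpow_iff_not_isOfFinOrder.2 ha) this,
     fun x => by
        obtain ⟨k, hk⟩ := Subgroup.mem_zpowers_iff.1 x.2
        exact ⟨Multiplicative.ofAdd k, Subtype.ext hk⟩⟩

noncomputable def zlog {G : Type*} [Group G] {a : G} (ha : ¬ IsOfFinOrder a) :
    ↥(Subgroup.zpowers a) →* Multiplicative ℤ := (zlogEquiv ha).symm

lemma zlog_spec {G : Type*} [Group G] {a : G} (ha : ¬ IsOfFinOrder a) (j : ℤ)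
    (h : a ^ j ∈ Subgroup.zpowers a) :
    zlog ha ⟨a ^ j, h⟩ = Multiplicative.ofAdd j := by
  apply (zlogEquiv ha).injective
  rw [zlog, MonoidHom.coe_coe, MulEquiv.apply_symm_apply]
  exact (Subtype.ext rfl).symm

lemma zlog_spec' {G : Type*} [Group G] {a : G} (ha : ¬ IsOfFinOrder a)
    (x : ↥(Subgroup.zpowers a)) (j : ℤ) (h : (x : G) = a ^ j) :
    zlog ha x = Multiplicative.ofAdd j := by
  have hx : x = ⟨a ^ j, by rw [← h]; exact x.2⟩ := Subtype.ext h
  rw [hx, zlog_spec]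

lemma exists_surj_rescale {K : Type*} [Group K] (f : K →* Multiplicative ℤ) (x : K)
    (hx : f x ≠ 1) :
    ∃ (ψ : K →* Multiplicative ℤ) (m : ℤ), m ≠ 0 ∧ Function.Surjective ψ ∧
      ∀ k, (f k).toAdd = (ψ k).toAdd * m := by
  classical
  set R : AddSubgroup ℤ :=
    { carrier := {n | ∃ k, (f k).toAdd = n}
      zero_mem' := ⟨1, by simp⟩
      add_mem' := fun {p q} hp hq => by
        obtain ⟨k1, h1⟩ := hp; obtain ⟨k2, h2⟩ := hq
        exact ⟨k1 * k2, by simp [← h1, ← h2]⟩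
      neg_mem' := fun {p} hp => by
        obtain ⟨k, h⟩ := hp
        exact ⟨k⁻¹, by simp [← h]⟩ } with hR
  obtain ⟨m, hm⟩ := Int.subgroup_cyclic R
  have hmemR : ∀ n : ℤ, n ∈ R ↔ ∃ c : ℤ, n = c * m := by
    intro n
    rw [hm, AddSubgroup.mem_closure_singleton]
    constructor
    · rintro ⟨c, rfl⟩; exact ⟨c, (zsmul_eq_mul m c).symm⟩
    · rintro ⟨c, rfl⟩; exact ⟨c, zsmul_eq_mul m c⟩
  have hfR : ∀ k, (f k).toAdd ∈ R := fun k => ⟨k, rfl⟩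
  have hm0 : m ≠ 0 := by
    rintro rfl
    obtain ⟨c, hc⟩ := (hmemR _).1 (hfR x)
    apply hx
    have : (f x).toAdd = 0 := by simpa using hc
    have := congrArg Multiplicative.ofAdd this
    simpa using this
  have hdvd : ∀ k : K, ∃ c : ℤ, (f k).toAdd = c * m := fun k => (hmemR _).1 (hfR k)
  let c : K → ℤ := fun k => Classical.choose (hdvd k)
  have hc : ∀ k, (f k).toAdd = c k * m := fun k => Classical.choose_spec (hdvd k)
  have huniq : ∀ (k : K) (d : ℤ), (f k).toAdd = d * m → c k = d := by
    intro k d hd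
    have : c k * m = d * m := (hc k).symm.trans hd
    exact mul_right_cancel₀ hm0 this
  refine ⟨{ toFun := fun k => Multiplicative.ofAdd (c k)
            map_one' := ?_
            map_mul' := ?_ }, m, hm0, ?_, ?_⟩
  · have : c 1 = 0 := huniq 1 0 (by simp)
    simp [this]
  · intro k1 k2
    have : c (k1 * k2) = c k1 + c k2 := by
      apply huniq
      rw [add_mul, ← hc k1, ← hc k2]
      simp
    simp [this]
  · intro y
    have : (y.toAdd * m) ∈ R := by rw [hmemR]; exact ⟨y.toAdd, rfl⟩
    obtain ⟨k, hk⟩ := this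
    replace hk : (f k).toAdd = y.toAdd * m := hk
    refine ⟨k, ?_⟩
    have : c k = y.toAdd := huniq k y.toAdd hk
    simp [this]
  · intro k
    simpa using hc k

/-- An infinite virtually cyclic group surjects onto either `ℤ` or the infinite
dihedral group `D∞` (which is `DihedralGroup 0` in Mathlib). -/
theorem infinite_virtuallyCyclic_surjects {G : Type*} [Group G] [Infinite G]
    (H : Subgroup G) (hc : IsCyclic H) (hf : H.FiniteIndex) :
    (∃ f : G →* Multiplicative ℤ, Function.Surjective f) ∨
    (∃ f : G →* DihedralGroup 0, Function.Surjective f) := by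
  classical
  haveI : IsCyclic ↥H := hc
  haveI : H.FiniteIndex := hf
  set N := H.normalCore with hN
  haveI hNc : IsCyclic ↥N := Subgroup.isCyclic_of_le H.normalCore_le
  haveI hNfi : N.FiniteIndex := H.finiteIndex_normalCore
  haveI hNn : N.Normal := H.normalCore_normal
  have hNinf : Infinite ↥N := by
    by_contra h
    rw [not_infinite_iff_finite] at h
    haveI := h
    haveI : Finite (G ⧸ N) := N.finite_quotient_of_finiteIndex
    haveI : Finite G := Finite.of_equiv _ (Subgroup.groupEquivQuotientProdSubgroup (s := N)).symm
    exact not_finite G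
  obtain ⟨a₀, ha₀⟩ := hNc.exists_generator
  set a : G := (a₀ : G) with haa
  have haN : a ∈ N := a₀.2
  have hgen : ∀ x ∈ N, ∃ j : ℤ, a ^ j = x := by
    intro x hx
    obtain ⟨j, hj⟩ := Subgroup.mem_zpowers_iff.1 (ha₀ ⟨x, hx⟩)
    exact ⟨j, by simpa [haa] using congrArg Subtype.val hj⟩
  have hNeq : N = Subgroup.zpowers a :=
    le_antisymm (fun x hx => Subgroup.mem_zpowers_iff.2 (hgen x hx)) (Subgroup.zpowers_le.2 haN)
  have hafin : ¬ IsOfFinOrder a := by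
    intro h
    have h1 : (Subgroup.zpowers a : Set G).Finite := h.finite_zpowers
    rw [← hNeq] at h1
    exact absurd (Set.infinite_coe_iff.1 (by rwa [← SetLike.coe_sort_coe] at hNinf)) h1.not_infinite
  have hinj : Function.Injective fun n : ℤ => a ^ n := injective_zpow_iff_not_isOfFinOrder.2 hafin
  have hconjmem : ∀ g : G, g * a * g⁻¹ ∈ N := fun g => hNn.conj_mem a haN g
  have hconjpow : ∀ (b x : G) (n : ℤ), b * x ^ n * b⁻¹ = (b * x * b⁻¹) ^ n := by
    intro b x n
    have := map_zpow (MulAut.conj b) x n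
    simpa [MulAut.conj_apply] using this.symm
  have hdich : ∀ g : G, g * a * g⁻¹ = a ∨ g * a * g⁻¹ = a⁻¹ := by
    intro g
    obtain ⟨m, hm⟩ := hgen _ (hconjmem g)
    obtain ⟨m', hm'⟩ := hgen _ (hconjmem g⁻¹)
    have key : a ^ (m' * m) = a ^ (1 : ℤ) := by
      rw [zpow_one, zpow_mul, hm', ← hconjpow g⁻¹ a m, hm]
      group
    have hmm : m' * m = 1 := hinj key
    rcases Int.eq_one_or_neg_one_of_mul_eq_one' hmm with ⟨_, h1⟩ | ⟨_, h1⟩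
    · left; rw [← hm, h1, zpow_one]
    · right; rw [← hm, h1]; simp
  by_cases hcen : ∀ g : G, g * a * g⁻¹ = a
  · left
    haveI hZfi : (Subgroup.zpowers a).FiniteIndex := hNeq ▸ hNfi
    set τ : G →* Multiplicative ℤ := MonoidHom.transfer (zlog hafin) with hτ
    have hcomm : ∀ g : G, Commute g a := fun g => by
      have := hcen g
      rwa [mul_inv_eq_iff_eq_mul] at this
    have key : ∀ (k : ℕ) (g₀ : G), g₀⁻¹ * a ^ k * g₀ ∈ Subgroup.zpowers a →
        g₀⁻¹ * a ^ k * g₀ = a ^ k := by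
      intro k g₀ _
      have hck : Commute g₀⁻¹ (a ^ k) := ((hcomm g₀).pow_right k).inv_left
      rw [hck.eq, mul_assoc, inv_mul_cancel, mul_one]
    have hτa : τ a = Multiplicative.ofAdd (((Subgroup.zpowers a).index : ℤ)) := by
      rw [hτ, MonoidHom.transfer_eq_pow (zlog hafin) a key]
      exact zlog_spec' hafin _ _ (zpow_natCast a _).symm
    have hτa1 : τ a ≠ 1 := by
      rw [hτa]
      simpa using fun h => hZfi.index_ne_zero (by exact_mod_cast h)
    obtain ⟨ψ, m, hm0, hsurj, hspec⟩ := exists_surj_rescale τ a hτa1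
    exact ⟨ψ, hsurj⟩
  · right
    push_neg at hcen
    obtain ⟨t, ht⟩ := hcen
    have hta : t * a * t⁻¹ = a⁻¹ := (hdich t).resolve_left ht
    have hta' : t⁻¹ * a * t = a⁻¹ := by
      rcases hdich t⁻¹ with h | h
      · exfalso
        apply ht
        rw [inv_inv] at h
        conv_lhs => rw [← h]
        group
      · rwa [inv_inv] at h
    set K : Subgroup G := Subgroup.centralizer {a} with hK
    have hmemK : ∀ g : G, g ∈ K ↔ a * g = g * a := by
      intro g
      rw [hK, Subgroup.mem_centralizer_iff]
      simp
    have hmemK' : ∀ g : G, g ∈ K ↔ g * a * g⁻¹ = a := by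
      intro g
      rw [hmemK, mul_inv_eq_iff_eq_mul, eq_comm]
    have hconjK : ∀ g : G, g ∉ K → g * a * g⁻¹ = a⁻¹ := fun g hg =>
      (hdich g).resolve_left fun h => hg ((hmemK' g).2 h)
    have haK : a ∈ K := (hmemK' a).2 (by group)
    have htK : t ∉ K := fun h => ht ((hmemK' t).1 h)
    have hNK : N ≤ K := by
      intro x hx
      obtain ⟨j, rfl⟩ := hgen x hx
      rw [hmemK]
      exact ((Commute.refl a).zpow_right j).eq
    have hmul_nn : ∀ {g₁ g₂ : G}, g₁ ∉ K → g₂ ∉ K → g₁ * g₂ ∈ K := by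
      intro g₁ g₂ h1 h2
      rw [hmemK']
      have e1 := hconjK g₁ h1
      have e2 := hconjK g₂ h2
      calc g₁ * g₂ * a * (g₁ * g₂)⁻¹ = g₁ * (g₂ * a * g₂⁻¹) * g₁⁻¹ := by group
        _ = g₁ * a⁻¹ * g₁⁻¹ := by rw [e2]
        _ = (g₁ * a * g₁⁻¹)⁻¹ := by group
        _ = a := by rw [e1, inv_inv]
    have hmul_yn : ∀ {g h : G}, g ∈ K → h ∉ K → g * h ∉ K := by
      intro g h hg hh hgh
      have := K.mul_mem (K.inv_mem hg) hgh
      rw [inv_mul_cancel_left] at this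
      exact hh this
    have hmul_ny : ∀ {g h : G}, g ∉ K → h ∈ K → g * h ∉ K := by
      intro g h hg hh hgh
      have := K.mul_mem hgh (K.inv_mem hh)
      rw [mul_inv_cancel_right] at this
      exact hg this
    have htinvK : t⁻¹ ∉ K := fun h => htK (by simpa using K.inv_mem h)
    have ht2K : t * t ∈ K := hmul_nn htK htK
    have hconjKmem : ∀ g : G, g ∈ K → t * g * t⁻¹ ∈ K := by
      intro k hk
      rw [hmemK']
      have hk' := (hmemK' k).1 hk
      have hmid : k * a⁻¹ * k⁻¹ = a⁻¹ := by
        calc k * a⁻¹ * k⁻¹ = (k * a * k⁻¹)⁻¹ := by group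
          _ = a⁻¹ := by rw [hk']
      calc (t * k * t⁻¹) * a * (t * k * t⁻¹)⁻¹
          = t * (k * (t⁻¹ * a * t) * k⁻¹) * t⁻¹ := by group
        _ = t * (k * a⁻¹ * k⁻¹) * t⁻¹ := by rw [hta']
        _ = t * a⁻¹ * t⁻¹ := by rw [hmid]
        _ = (t * a * t⁻¹)⁻¹ := by group
        _ = a := by rw [hta, inv_inv]
    have hconjKmem' : ∀ g : G, g ∈ K → t⁻¹ * g * t ∈ K := by
      intro k hk
      rw [hmemK']
      have hk' := (hmemK' k).1 hk
      have hmid : k * a⁻¹ * k⁻¹ = a⁻¹ := by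
        calc k * a⁻¹ * k⁻¹ = (k * a * k⁻¹)⁻¹ := by group
          _ = a⁻¹ := by rw [hk']
      calc (t⁻¹ * k * t) * a * (t⁻¹ * k * t)⁻¹
          = t⁻¹ * (k * (t * a * t⁻¹) * k⁻¹) * t := by group
        _ = t⁻¹ * (k * a⁻¹ * k⁻¹) * t := by rw [hta]
        _ = t⁻¹ * a⁻¹ * t := by rw [hmid]
        _ = (t⁻¹ * a * t)⁻¹ := by group
        _ = a := by rw [hta', inv_inv]
    set aK : ↥K := ⟨a, haK⟩ with haKdef
    have hgenK : ∀ x : ↥K, (x : G) ∈ N → ∃ j : ℤ, aK ^ j = x := by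
      intro x hx
      obtain ⟨j, hj⟩ := hgen _ hx
      exact ⟨j, Subtype.ext (by simpa using hj)⟩
    have hSeq : Subgroup.zpowers aK = N.subgroupOf K := by
      ext x
      simp only [Subgroup.mem_zpowers_iff, Subgroup.mem_subgroupOf]
      constructor
      · rintro ⟨j, rfl⟩
        show ((aK ^ j : ↥K) : G) ∈ N
        simpa using N.zpow_mem haN j
      · exact hgenK x
    haveI hSfi : (Subgroup.zpowers aK).FiniteIndex := by
      rw [hSeq]
      constructor
      intro h0
      have hdvd : N.relIndex K ∣ N.index := Subgroup.relIndex_dvd_index_of_le hNK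
      have h0' : N.relIndex K = 0 := h0
      rw [h0'] at hdvd
      exact hNfi.index_ne_zero (zero_dvd_iff.mp hdvd)
    have haKfin : ¬ IsOfFinOrder aK := fun h => hafin (by simpa using K.subtype.isOfFinOrder h)
    set τ : ↥K →* Multiplicative ℤ := MonoidHom.transfer (zlog haKfin) with hτ
    have keyK : ∀ (k : ℕ) (g₀ : ↥K), g₀⁻¹ * aK ^ k * g₀ ∈ Subgroup.zpowers aK →
        g₀⁻¹ * aK ^ k * g₀ = aK ^ k := by
      intro k g₀ _
      have hcm : Commute g₀ aK := Subtype.ext ((hmemK (g₀ : G)).1 g₀.2).symm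
      have hck : Commute g₀⁻¹ (aK ^ k) := (hcm.pow_right k).inv_left
      rw [hck.eq, mul_assoc, inv_mul_cancel, mul_one]
    have hτa : τ aK = Multiplicative.ofAdd (((Subgroup.zpowers aK).index : ℤ)) := by
      rw [hτ, MonoidHom.transfer_eq_pow (zlog haKfin) aK keyK]
      exact zlog_spec' haKfin _ _ (zpow_natCast aK _).symm
    set ct : ↥K →* ↥K :=
      { toFun := fun k => ⟨t * (k : G) * t⁻¹, hconjKmem _ k.2⟩
        map_one' := Subtype.ext (by show t * (1 : G) * t⁻¹ = 1; group)
        map_mul' := fun k l => Subtype.ext (by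
          show t * ((k : G) * (l : G)) * t⁻¹ = (t * (k : G) * t⁻¹) * (t * (l : G) * t⁻¹)
          group) } with hct
    have hct_apply : ∀ k : ↥K, ((ct k : ↥K) : G) = t * (k : G) * t⁻¹ := fun k => rfl
    set f : ↥K →* Multiplicative ℤ := τ / (τ.comp ct) with hfdef
    have hf_apply : ∀ k, f k = τ k / τ (ct k) := fun k => rfl
    have hctaK : ct aK = aK⁻¹ := Subtype.ext (by show t * a * t⁻¹ = (aK⁻¹ : ↥K); simpa using hta)
    have hfa : f aK ≠ 1 := by
      have hcalc : f aK = Multiplicative.ofAdd ((((Subgroup.zpowers aK).index : ℤ))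
          + ((Subgroup.zpowers aK).index : ℤ)) := by
        rw [hf_apply, hctaK, map_inv, hτa, div_inv_eq_mul, ← ofAdd_add]
      rw [hcalc, Ne, ofAdd_eq_one]
      intro h
      have : (Subgroup.zpowers aK).index = 0 := by exact_mod_cast by omega
      exact hSfi.index_ne_zero this
    have hct2 : ∀ k : ↥K, ct (ct k) = (⟨t * t, ht2K⟩ : ↥K) * k * (⟨t * t, ht2K⟩ : ↥K)⁻¹ := by
      intro k
      apply Subtype.ext
      show t * (t * (k : G) * t⁻¹) * t⁻¹ = (t * t) * (k : G) * (t * t)⁻¹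
      group
    have hfct : ∀ k, f (ct k) = (f k)⁻¹ := by
      intro k
      have h1 : τ (ct (ct k)) = τ k := by
        rw [hct2, map_mul, map_mul, map_inv, mul_comm (τ ⟨t * t, ht2K⟩) (τ k),
          mul_inv_cancel_right]
      rw [hf_apply, hf_apply, h1, inv_div]
    obtain ⟨ψ, m, hm0, hsurj, hspec⟩ := exists_surj_rescale f aK hfa
    have hψct : ∀ k, ψ (ct k) = (ψ k)⁻¹ := by
      intro k
      have h1 := hspec (ct k)
      rw [hfct k] at h1
      have h2 := hspec k
      rw [toAdd_inv, h2] at h1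
      have h3 : (ψ (ct k)).toAdd * m = (-(ψ k).toAdd) * m := by rw [← h1]; ring
      have h4 := mul_right_cancel₀ hm0 h3
      apply Multiplicative.toAdd.injective
      rw [h4, toAdd_inv]
    have hψt2 : ψ ⟨t * t, ht2K⟩ = 1 := by
      have hcfix : ct ⟨t * t, ht2K⟩ = ⟨t * t, ht2K⟩ := Subtype.ext (by
        show t * (t * t) * t⁻¹ = t * t; group)
      have h1 := hψct ⟨t * t, ht2K⟩
      rw [hcfix] at h1
      have h2 := congrArg Multiplicative.toAdd h1
      rw [toAdd_inv] at h2
      apply Multiplicative.toAdd.injective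
      show (ψ ⟨t * t, ht2K⟩).toAdd = (0 : ℤ)
      omega
    set w : G → ℤ := fun g => if h : g ∈ K then (ψ ⟨g, h⟩).toAdd else 0 with hw
    have hwK : ∀ {g : G} (h : g ∈ K), w g = (ψ ⟨g, h⟩).toAdd := fun {g} h => dif_pos h
    have hwmul : ∀ {g₁ g₂ : G} (h1 : g₁ ∈ K) (h2 : g₂ ∈ K), w (g₁ * g₂) = w g₁ + w g₂ := by
      intro g₁ g₂ h1 h2
      rw [hwK (K.mul_mem h1 h2), hwK h1, hwK h2]
      have he : (⟨g₁ * g₂, K.mul_mem h1 h2⟩ : ↥K) = ⟨g₁, h1⟩ * ⟨g₂, h2⟩ := rfl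
      rw [he, map_mul]
      rfl
    have hwconj : ∀ {g : G} (h : g ∈ K), w (t * g * t⁻¹) = - w g := by
      intro g h
      rw [hwK (hconjKmem g h), hwK h]
      have he : (⟨t * g * t⁻¹, hconjKmem g h⟩ : ↥K) = ct ⟨g, h⟩ := rfl
      rw [he, hψct, toAdd_inv]
    have hwconj' : ∀ {g : G} (h : g ∈ K), w (t⁻¹ * g * t) = - w g := by
      intro g h
      have hmem : t⁻¹ * g * t ∈ K := hconjKmem' g h
      have h1 := hwconj hmem
      have he : t * (t⁻¹ * g * t) * t⁻¹ = g := by group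
      rw [he] at h1
      omega
    have hwt2 : w (t * t) = 0 := by rw [hwK ht2K, hψt2]; rfl
    refine ⟨{ toFun := fun g => if g ∈ K then DihedralGroup.r (w g)
                else DihedralGroup.sr (w (t⁻¹ * g))
              map_one' := ?_
              map_mul' := ?_ }, ?_⟩
    · have h1 : w (1 : G) = 0 := by
        rw [hwK K.one_mem]
        show (ψ 1).toAdd = 0
        rw [map_one]
        rfl
      rw [if_pos K.one_mem, h1]
      exact DihedralGroup.one_def.symm
    · intro g₁ g₂
      by_cases h1 : g₁ ∈ K <;> by_cases h2 : g₂ ∈ K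
      · erw [if_pos h1, if_pos h2, if_pos (K.mul_mem h1 h2), DihedralGroup.r_mul_r,
          hwmul h1 h2]
        rfl
      · erw [if_pos h1, if_neg h2, if_neg (hmul_yn h1 h2), DihedralGroup.r_mul_sr]
        have hrw : t⁻¹ * (g₁ * g₂) = (t⁻¹ * g₁ * t) * (t⁻¹ * g₂) := by group
        rw [hrw, hwmul (hconjKmem' g₁ h1) (hmul_nn htinvK h2), hwconj' h1]
        congr 1
        exact neg_add_eq_sub _ _
      · erw [if_neg h1, if_pos h2, if_neg (hmul_ny h1 h2), DihedralGroup.sr_mul_r]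
        have hrw : t⁻¹ * (g₁ * g₂) = (t⁻¹ * g₁) * g₂ := by group
        rw [hrw, hwmul (hmul_nn htinvK h1) h2]
        rfl
      · erw [if_neg h1, if_neg h2, if_pos (hmul_nn h1 h2), DihedralGroup.sr_mul_sr]
        have e1 : w (g₁ * t) = - w (t⁻¹ * g₁) := by
          have hrw : g₁ * t = (t * (t⁻¹ * g₁) * t⁻¹) * (t * t) := by group
          rw [hrw, hwmul (hconjKmem _ (hmul_nn htinvK h1)) ht2K,
            hwconj (hmul_nn htinvK h1), hwt2]
          ring
        have hrw : g₁ * g₂ = (g₁ * t) * (t⁻¹ * g₂) := by group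
        rw [hrw, hwmul (hmul_nn h1 htK) (hmul_nn htinvK h2), e1]
        congr 1
        exact neg_add_eq_sub _ _
    · intro x
      cases x with
      | r i =>
        obtain ⟨k, hk⟩ := hsurj (Multiplicative.ofAdd i)
        refine ⟨(k : G), ?_⟩
        dsimp only [MonoidHom.coe_mk, OneHom.coe_mk]
        rw [if_pos k.2]
        have : w (k : G) = i := by
          rw [hwK k.2]
          have he : (⟨(k : G), k.2⟩ : ↥K) = k := rfl
          rw [he, hk]
          rfl
        rw [this]
      | sr i =>
        obtain ⟨k, hk⟩ := hsurj (Multiplicative.ofAdd i)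
        refine ⟨t * (k : G), ?_⟩
        dsimp only [MonoidHom.coe_mk, OneHom.coe_mk]
        rw [if_neg (hmul_ny htK k.2)]
        have he2 : t⁻¹ * (t * (k : G)) = (k : G) := by group
        rw [he2]
        have : w (k : G) = i := by
          rw [hwK k.2]
          have he : (⟨(k : G), k.2⟩ : ↥K) = k := rfl
          rw [he, hk]
          rfl
        rw [this]
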